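/- Let γ₀ be a hyperbolic element of PSL(2,R) × PSL(2,R) preserving the domain W ⊂ dS² bounded by two invariant isotropic geodesics, where dS² is identified with RP¹ × RP¹ minus the diagonal and W = {(x,y) : x ∈ I, y ≠ x} for an interval I ⊂ RP¹ whose endpoints are the fixed points of the first factor. Then the action of γ₀ on W is free and properly discontinuous, and the second isotropic foliation (by lines RP¹ × {*} intersected with W) descends to the quotient with exactly two compact leaves. -/

import Mathlib

/-- Lifted model of the region `W ⊂ dS² = ℝP¹ × ℝP¹ ∖ Δ` bounded by the two
invariant isotropic geodesics: pairs `(x, y)` with `x` in the (lifted)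
interval `(x₀, x₁)` and `y ≠ x`, represented by `x < y < δ x`. -/
def Wset (δ : ℝ ≃ₜ ℝ) (x₀ x₁ : ℝ) : Set (ℝ × ℝ) :=
  {p | x₀ < p.1 ∧ p.1 < x₁ ∧ p.1 < p.2 ∧ p.2 < δ p.1}

/-- The leaf of the second isotropic foliation (lines `ℝP¹ × {c}`) through the
projective point represented by `c`. -/
def leafSet (δ : ℝ ≃ₜ ℝ) (x₀ x₁ c : ℝ) : Set (ℝ × ℝ) :=
  {p ∈ Wset δ x₀ x₁ | ∃ n : ℤ, p.2 = (δ.toEquiv ^ n) c}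

private def stmt13Hom : Equiv.Perm ℝ →* Equiv.Perm (ℝ × ℝ) where
  toFun e := e.prodCongr e
  map_one' := Equiv.ext fun _ => rfl
  map_mul' _ _ := Equiv.ext fun _ => rfl

private lemma pc_zpow (e : Equiv.Perm ℝ) (n : ℤ) (p : ℝ × ℝ) :
    ((e.prodCongr e) ^ n) p = ((e ^ n) p.1, (e ^ n) p.2) := by
  have h : (e.prodCongr e) ^ n = stmt13Hom (e ^ n) := (map_zpow stmt13Hom e n).symm
  rw [h]; rfl

private lemma cancelPerm (f : Equiv.Perm ℝ) (a b : ℤ) (x : ℝ) :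
    (f ^ a) ((f ^ b) x) = (f ^ (a + b)) x := by
  rw [← Equiv.Perm.mul_apply, ← zpow_add]

private lemma sm_symm (e : Equiv.Perm ℝ) (he : StrictMono ⇑e) : StrictMono ⇑(e⁻¹) :=
  fun a b h => he.lt_iff_lt.mp (by simpa using h)

private lemma sm_zpow (e : Equiv.Perm ℝ) (he : StrictMono ⇑e) :
    ∀ n : ℤ, StrictMono ⇑(e ^ n) := by
  have hp : ∀ n : ℕ, StrictMono ⇑(e ^ n) := by
    intro n
    induction n with
    | zero => simpa using strictMono_id
    | succ k ih =>
      rw [pow_succ]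
      intro a b h
      have : (e ^ k * e) a = (e ^ k) (e a) := rfl
      simpa [Equiv.Perm.mul_apply] using ih (he h)
  intro n
  obtain ⟨m, rfl | rfl⟩ := Int.eq_nat_or_neg n
  · rw [zpow_natCast]; exact hp m
  · rw [zpow_neg, zpow_natCast]; exact sm_symm _ (hp m)

private lemma orbitMono (e : Equiv.Perm ℝ) (he : StrictMono ⇑e) (a : ℝ) (ha : a < e a) :
    StrictMono fun j : ℤ => (e ^ j) a := by
  apply strictMono_int_of_lt_succ
  intro n
  show (e ^ n) a < (e ^ (n + 1)) a
  rw [zpow_add_one, Equiv.Perm.mul_apply]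
  exact sm_zpow e he n ha

private lemma keyDisj (e : Equiv.Perm ℝ) (he : StrictMono ⇑e) (a : ℝ) (ha : a < e a)
    (n : ℤ) (hn : n ≠ 0) (s : ℝ) (hs : s ∈ Set.Ioo a (e a)) :
    (e ^ n) s ∉ Set.Ioo a (e a) := by
  intro hmem
  have A : StrictMono fun j : ℤ => (e ^ j) a := orbitMono e he a ha
  have h1 : (e ^ n) a < (e ^ n) s := sm_zpow e he n hs.1
  have h2 : (e ^ n) s < (e ^ n) (e a) := sm_zpow e he n hs.2
  have h3 : (e ^ n) (e a) = (e ^ (n + 1)) a := by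
    rw [zpow_add_one, Equiv.Perm.mul_apply]
  rcases lt_or_gt_of_ne hn with h | h
  · have h4 : (e ^ (n + 1)) a ≤ (e ^ (0 : ℤ)) a := A.monotone (by omega)
    have h5 : (e ^ (0 : ℤ)) a = a := by simp
    rw [h3] at h2
    rw [h5] at h4
    linarith [hmem.1]
  · have h4 : (e ^ (1 : ℤ)) a ≤ (e ^ n) a := A.monotone (by omega)
    have h5 : (e ^ (1 : ℤ)) a = e a := by simp
    rw [h5] at h4
    linarith [hmem.2]

private lemma escapeUp (e : ℝ ≃ₜ ℝ) (he : ∀ x : ℝ, x < e x) (c y : ℝ) :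
    ∃ n : ℤ, y < (e.toEquiv ^ n) c := by
  by_contra hcon
  push_neg at hcon
  set u : ℕ → ℝ := fun n => (e.toEquiv ^ (n : ℤ)) c with hu
  have hstep : ∀ n : ℕ, u (n + 1) = e (u n) := by
    intro n
    show (e.toEquiv ^ ((n + 1 : ℕ) : ℤ)) c = e ((e.toEquiv ^ ((n : ℕ) : ℤ)) c)
    rw [show ((n + 1 : ℕ) : ℤ) = 1 + (n : ℤ) by push_cast; ring, zpow_add, zpow_one,
      Equiv.Perm.mul_apply]
    rfl
  have hmono : Monotone u := monotone_nat_of_le_succ fun n => by rw [hstep]; exact (he _).le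
  have hbdd : BddAbove (Set.range u) := ⟨y, by rintro _ ⟨n, rfl⟩; exact hcon _⟩
  have h1 : Filter.Tendsto u Filter.atTop (nhds (⨆ n, u n)) := tendsto_atTop_ciSup hmono hbdd
  have hL : Filter.Tendsto (fun n => u (n + 1)) Filter.atTop (nhds (⨆ n, u n)) :=
    h1.comp (Filter.tendsto_add_atTop_nat 1)
  have hL' : Filter.Tendsto (fun n => u (n + 1)) Filter.atTop (nhds (e (⨆ n, u n))) := by
    have h2 := (e.continuous.tendsto (⨆ n, u n)).comp h1
    simpa only [Function.comp_def, ← hstep] using h2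
  have h3 : e (⨆ n, u n) = ⨆ n, u n := tendsto_nhds_unique hL' hL
  exact absurd h3 (he _).ne'

private lemma escapeDown (e : ℝ ≃ₜ ℝ) (he : ∀ x : ℝ, x < e x) (c y : ℝ) :
    ∃ n : ℤ, (e.toEquiv ^ n) c < y := by
  by_contra hcon
  push_neg at hcon
  set u : ℕ → ℝ := fun n => (e.toEquiv ^ (-(n : ℤ))) c with hu
  have hsymm_lt : ∀ x : ℝ, e.symm x < x := by
    intro x
    have h := he (e.symm x)
    rwa [Homeomorph.apply_symm_apply] at h
  have hstep : ∀ n : ℕ, u (n + 1) = e.symm (u n) := by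
    intro n
    show (e.toEquiv ^ (-((n + 1 : ℕ) : ℤ))) c = e.symm ((e.toEquiv ^ (-((n : ℕ) : ℤ))) c)
    rw [show (-((n + 1 : ℕ) : ℤ)) = (-1) + (-(n : ℤ)) by push_cast; ring, zpow_add,
      Equiv.Perm.mul_apply, zpow_neg_one]
    rfl
  have hmono : Antitone u := antitone_nat_of_succ_le fun n => by
    rw [hstep]; exact (hsymm_lt _).le
  have hbdd : BddBelow (Set.range u) := ⟨y, by rintro _ ⟨n, rfl⟩; exact hcon _⟩
  have h1 : Filter.Tendsto u Filter.atTop (nhds (⨅ n, u n)) := tendsto_atTop_ciInf hmono hbdd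
  have hL : Filter.Tendsto (fun n => u (n + 1)) Filter.atTop (nhds (⨅ n, u n)) :=
    h1.comp (Filter.tendsto_add_atTop_nat 1)
  have hL' : Filter.Tendsto (fun n => u (n + 1)) Filter.atTop (nhds (e.symm (⨅ n, u n))) := by
    have h2 := (e.symm.continuous.tendsto (⨅ n, u n)).comp h1
    simpa only [Function.comp_def, ← hstep] using h2
  have h3 : e.symm (⨅ n, u n) = ⨅ n, u n := tendsto_nhds_unique hL' hL
  exact absurd h3 (hsymm_lt _).ne

/-- A hyperbolic element `γ₀ = (g, g)` of `PSL(2,ℝ) × PSL(2,ℝ)` preserves the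
region `W ⊂ dS² = ℝP¹ × ℝP¹ ∖ Δ` over the interval `I` whose endpoints are the
fixed points of `g`; its action on `W` is free and properly discontinuous, it
permutes the leaves of the second isotropic foliation (sending the leaf over
`c` to the leaf over `g c`), and exactly the two leaves over the fixed points
`x₀`, `x₁` are invariant, i.e. the foliation descends to the quotient with
exactly two compact leaves.  (Everything is expressed in the universal cover
`ℝ` of `ℝP¹`, with central deck translation `δ`.) -/
theorem stmt13 (δ g : ℝ ≃ₜ ℝ)
    (hδmono : StrictMono δ) (hδ : ∀ x : ℝ, x < δ x) (hgmono : StrictMono g)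
    (hcomm : ∀ x : ℝ, g (δ x) = δ (g x))
    (x₀ x₁ : ℝ) (h01 : x₀ < x₁) (h1δ : x₁ < δ x₀)
    (hfix : ∀ x : ℝ, g x = x ↔
      ((∃ n : ℤ, x = (δ.toEquiv ^ n) x₀) ∨ (∃ n : ℤ, x = (δ.toEquiv ^ n) x₁)))
    (hhyp : ∀ m k : ℤ, m ≠ 0 → ∀ x : ℝ, (g.toEquiv ^ m) x = (δ.toEquiv ^ k) x →
      ∃ j : ℤ, x = (δ.toEquiv ^ j) x₀ ∨ x = (δ.toEquiv ^ j) x₁) :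
    (∀ p ∈ Wset δ x₀ x₁, (g.toEquiv.prodCongr g.toEquiv) p ∈ Wset δ x₀ x₁) ∧
    (∀ n : ℤ, n ≠ 0 → ∀ p ∈ Wset δ x₀ x₁,
      ((g.toEquiv.prodCongr g.toEquiv) ^ n) p ≠ p) ∧
    (∀ p ∈ Wset δ x₀ x₁, ∃ U : Set (ℝ × ℝ), IsOpen U ∧ p ∈ U ∧ U ⊆ Wset δ x₀ x₁ ∧
      ∀ n : ℤ, n ≠ 0 →
        Disjoint ((fun q => ((g.toEquiv.prodCongr g.toEquiv) ^ n) q) '' U) U) ∧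
    (∀ c : ℝ, (fun q => (g.toEquiv.prodCongr g.toEquiv) q) '' leafSet δ x₀ x₁ c
        = leafSet δ x₀ x₁ (g c)) ∧
    (∀ c : ℝ,
      ((∃ m : ℤ, m ≠ 0 ∧
          (fun q => ((g.toEquiv.prodCongr g.toEquiv) ^ m) q) '' leafSet δ x₀ x₁ c
            = leafSet δ x₀ x₁ c) ↔
        ((∃ n : ℤ, c = (δ.toEquiv ^ n) x₀) ∨ (∃ n : ℤ, c = (δ.toEquiv ^ n) x₁)))) := by
  have hδm' : StrictMono ⇑δ.toEquiv := fun _ _ h => hδmono h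
  have hgm' : StrictMono ⇑g.toEquiv := fun _ _ h => hgmono h
  have hδ' : ∀ x : ℝ, x < δ.toEquiv x := fun x => hδ x
  -- commuting powers
  have hC : Commute g.toEquiv δ.toEquiv := by
    apply Equiv.ext
    intro x
    simpa [Equiv.Perm.mul_apply] using hcomm x
  have hcommP : ∀ (m n : ℤ) (x : ℝ),
      (g.toEquiv ^ m) ((δ.toEquiv ^ n) x) = (δ.toEquiv ^ n) ((g.toEquiv ^ m) x) := by
    intro m n x
    have h := hC.zpow_zpow m n
    have h2 := congrArg (fun e : Equiv.Perm ℝ => e x) h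
    simpa [Equiv.Perm.mul_apply] using h2
  -- fixed points
  have hg0 : g.toEquiv x₀ = x₀ := (hfix x₀).mpr (Or.inl ⟨0, by simp⟩)
  have hg1 : g.toEquiv x₁ = x₁ := (hfix x₁).mpr (Or.inr ⟨0, by simp⟩)
  have hg0m : ∀ m : ℤ, (g.toEquiv ^ m) x₀ = x₀ := fun m =>
    Function.IsFixedPt.perm_zpow hg0 m
  have hg1m : ∀ m : ℤ, (g.toEquiv ^ m) x₁ = x₁ := fun m =>
    Function.IsFixedPt.perm_zpow hg1 m
  -- orbit points of x₀, x₁ are not in (x₀, x₁)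
  have hnotin : ∀ y : ℝ,
      ((∃ j : ℤ, y = (δ.toEquiv ^ j) x₀) ∨ (∃ j : ℤ, y = (δ.toEquiv ^ j) x₁)) →
      y ∉ Set.Ioo x₀ x₁ := by
    rintro y (⟨j, rfl⟩ | ⟨j, rfl⟩) ⟨hy1, hy2⟩
    · have A : StrictMono fun j : ℤ => (δ.toEquiv ^ j) x₀ := orbitMono _ hδm' _ (hδ' x₀)
      rcases lt_trichotomy j 0 with h | h | h
      · have h4 : (δ.toEquiv ^ j) x₀ < (δ.toEquiv ^ (0 : ℤ)) x₀ := A h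
        simp only [zpow_zero, Equiv.Perm.coe_one, id_eq] at h4
        linarith
      · subst h; simp at hy1
      · have h4 : (δ.toEquiv ^ (1 : ℤ)) x₀ ≤ (δ.toEquiv ^ j) x₀ := A.monotone (by omega)
        have h5 : (δ.toEquiv ^ (1 : ℤ)) x₀ = δ x₀ := by simp
        rw [h5] at h4
        linarith
    · have B : StrictMono fun j : ℤ => (δ.toEquiv ^ j) x₁ := orbitMono _ hδm' _ (hδ' x₁)
      rcases lt_trichotomy j 0 with h | h | h
      · have h7 := cancelPerm δ.toEquiv 1 j x₁
        rw [zpow_one] at h7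
        have h8 := hδm' hy1
        rw [h7] at h8
        have h9 : (δ.toEquiv ^ (1 + j)) x₁ ≤ (δ.toEquiv ^ (0 : ℤ)) x₁ := B.monotone (by omega)
        have h10 : (δ.toEquiv ^ (0 : ℤ)) x₁ = x₁ := by simp
        have h11 : δ.toEquiv x₀ = δ x₀ := rfl
        rw [h11] at h8
        linarith
      · subst h; simp at hy2
      · have h4 : (δ.toEquiv ^ (1 : ℤ)) x₁ ≤ (δ.toEquiv ^ j) x₁ := B.monotone (by omega)
        have h5 : (δ.toEquiv ^ (1 : ℤ)) x₁ = δ x₁ := by simp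
        rw [h5] at h4
        have := hδ x₁
        linarith
  -- W is preserved by all powers of g (diagonally)
  have hW : ∀ (m : ℤ) (p : ℝ × ℝ), p ∈ Wset δ x₀ x₁ →
      ((g.toEquiv ^ m) p.1, (g.toEquiv ^ m) p.2) ∈ Wset δ x₀ x₁ := by
    intro m p hp
    obtain ⟨h1, h2, h3, h4⟩ := hp
    have sm := sm_zpow g.toEquiv hgm' m
    refine ⟨?_, ?_, sm h3, ?_⟩
    · have h5 := sm h1
      rwa [hg0m] at h5
    · have h5 := sm h2
      rwa [hg1m] at h5
    · have h5 := sm h4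
      have hc : (g.toEquiv ^ m) (δ p.1) = δ ((g.toEquiv ^ m) p.1) := by
        have := hcommP m 1 p.1
        simpa using this
      rwa [hc] at h5
  -- leaves are permuted by powers of g
  have hleaf : ∀ (m : ℤ) (c : ℝ),
      (fun q => ((g.toEquiv.prodCongr g.toEquiv) ^ m) q) '' leafSet δ x₀ x₁ c
        = leafSet δ x₀ x₁ ((g.toEquiv ^ m) c) := by
    intro m c
    ext q
    constructor
    · rintro ⟨p, ⟨hpW, n, hpn⟩, rfl⟩
      show ((g.toEquiv.prodCongr g.toEquiv) ^ m) p ∈ leafSet δ x₀ x₁ ((g.toEquiv ^ m) c)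
      rw [pc_zpow]
      refine ⟨hW m p hpW, n, ?_⟩
      show (g.toEquiv ^ m) p.2 = (δ.toEquiv ^ n) ((g.toEquiv ^ m) c)
      rw [hpn]
      exact hcommP m n c
    · rintro ⟨hqW, n, hqn⟩
      refine ⟨((g.toEquiv ^ (-m)) q.1, (g.toEquiv ^ (-m)) q.2), ⟨hW (-m) q hqW, n, ?_⟩, ?_⟩
      · show (g.toEquiv ^ (-m)) q.2 = (δ.toEquiv ^ n) c
        rw [hqn, hcommP (-m) n, cancelPerm]
        simp
      · show ((g.toEquiv.prodCongr g.toEquiv) ^ m) _ = q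
        rw [pc_zpow]
        simp [cancelPerm]
  refine ⟨?_, ?_, ?_, ?_, ?_⟩
  · -- W preserved
    intro p hp
    have h := hW 1 p hp
    rw [zpow_one] at h
    exact h
  · -- free action
    intro n hn p hp hfx
    rw [pc_zpow] at hfx
    have h1 : (g.toEquiv ^ n) p.1 = p.1 := congrArg Prod.fst hfx
    obtain ⟨j, hj⟩ := hhyp n 0 hn p.1 (by simpa using h1)
    exact hnotin p.1 (hj.imp (fun h => ⟨j, h⟩) fun h => ⟨j, h⟩) ⟨hp.1, hp.2.1⟩
  · -- properly discontinuous
    intro p hp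
    have hp1 : p.1 ∈ Set.Ioo x₀ x₁ := ⟨hp.1, hp.2.1⟩
    have hne : g.toEquiv p.1 ≠ p.1 := fun h => hnotin p.1 ((hfix p.1).mp h) hp1
    have hcases : ∃ (e : Equiv.Perm ℝ) (a : ℝ), StrictMono ⇑e ∧ a < e a ∧
        p.1 ∈ Set.Ioo a (e a) ∧
        ∀ n : ℤ, n ≠ 0 → ∀ x : ℝ, ∃ m : ℤ, m ≠ 0 ∧ (g.toEquiv ^ n) x = (e ^ m) x := by
      rcases hne.lt_or_gt with hlt | hgt
      · have hsym : StrictMono ⇑(g.toEquiv⁻¹) := sm_symm _ hgm'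
        have h1 : p.1 < g.toEquiv⁻¹ p.1 := hgm'.lt_iff_lt.mp (by simpa using hlt)
        obtain ⟨b, hb1, hb2⟩ := exists_between h1
        have hgb : g.toEquiv b < p.1 := by
          have h2 := hgm' hb2
          simpa using h2
        refine ⟨g.toEquiv⁻¹, g.toEquiv b, hsym, ?_, ⟨hgb, ?_⟩, ?_⟩
        · show g.toEquiv b < g.toEquiv⁻¹ (g.toEquiv b)
          simp only [Equiv.Perm.inv_def, Equiv.symm_apply_apply]
          exact hgb.trans hb1
        · show p.1 < g.toEquiv⁻¹ (g.toEquiv b)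
          simp only [Equiv.Perm.inv_def, Equiv.symm_apply_apply]
          exact hb1
        · intro n hn x
          refine ⟨-n, neg_ne_zero.mpr hn, ?_⟩
          simp [zpow_neg, inv_zpow]
      · have h1 : g.toEquiv⁻¹ p.1 < p.1 := hgm'.lt_iff_lt.mp (by simpa using hgt)
        obtain ⟨a, ha1, ha2⟩ := exists_between h1
        have hga : p.1 < g.toEquiv a := by
          have h2 := hgm' ha1
          simpa using h2
        exact ⟨g.toEquiv, a, hgm', ha2.trans hga, ⟨ha2, hga⟩, fun n hn x => ⟨n, hn, rfl⟩⟩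
    obtain ⟨e, a, he, ha, hpI, hrep⟩ := hcases
    have hWopen : IsOpen (Wset δ x₀ x₁) := by
      simp only [Wset, Set.setOf_and]
      exact ((isOpen_lt continuous_const continuous_fst).inter
        ((isOpen_lt continuous_fst continuous_const).inter
          ((isOpen_lt continuous_fst continuous_snd).inter
            (isOpen_lt continuous_snd (δ.continuous.comp continuous_fst)))))
    refine ⟨Wset δ x₀ x₁ ∩ {q : ℝ × ℝ | a < q.1 ∧ q.1 < e a}, ?_, ⟨hp, hpI.1, hpI.2⟩,
      Set.inter_subset_left, ?_⟩
    · refine hWopen.inter ?_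
      simp only [Set.setOf_and]
      exact (isOpen_lt continuous_const continuous_fst).inter
        (isOpen_lt continuous_fst continuous_const)
    · intro n hn
      rw [Set.disjoint_left]
      rintro q ⟨r, ⟨hrW, hrI1, hrI2⟩, rfl⟩ ⟨hqW, hqI1, hqI2⟩
      obtain ⟨m, hm, hmx⟩ := hrep n hn r.1
      have hq1 : ((fun q => ((g.toEquiv.prodCongr g.toEquiv) ^ n) q) r).1
          = (g.toEquiv ^ n) r.1 := by
        show (((g.toEquiv.prodCongr g.toEquiv) ^ n) r).1 = _
        rw [pc_zpow]
      rw [hq1, hmx] at hqI1 hqI2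
      exact keyDisj e he a ha m hm r.1 ⟨hrI1, hrI2⟩ ⟨hqI1, hqI2⟩
  · -- leaves are permuted
    intro c
    have h := hleaf 1 c
    simp only [zpow_one] at h
    exact h
  · -- exactly two invariant leaves
    intro c
    constructor
    · rintro ⟨m, hm, heq⟩
      -- the leaf over c is nonempty
      obtain ⟨jhi, hjhi⟩ := escapeUp δ hδ c x₀
      obtain ⟨jlo, hjlo⟩ := escapeDown δ hδ c x₀
      have A : StrictMono fun j : ℤ => (δ.toEquiv ^ j) c := orbitMono _ hδm' _ (hδ' c)
      have hbddP : ∃ b : ℤ, ∀ z : ℤ, x₀ < (δ.toEquiv ^ z) c → b ≤ z := by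
        refine ⟨jlo + 1, fun z hz => ?_⟩
        by_contra hzb
        push_neg at hzb
        have h2 : (δ.toEquiv ^ z) c ≤ (δ.toEquiv ^ jlo) c := A.monotone (by omega)
        linarith
      obtain ⟨k, hk, hmin⟩ := Int.exists_least_of_bdd hbddP ⟨jhi, hjhi⟩
      have hk1 : (δ.toEquiv ^ (k - 1)) c ≤ x₀ := by
        by_contra hlt
        push_neg at hlt
        have := hmin _ hlt
        omega
      set y : ℝ := (δ.toEquiv ^ k) c with hydef
      have hky : y ≤ δ x₀ := by
        have h6' := cancelPerm δ.toEquiv 1 (k - 1) c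
        rw [zpow_one, show (1 : ℤ) + (k - 1) = k by ring] at h6'
        calc y = (δ.toEquiv ^ k) c := hydef
          _ = δ.toEquiv ((δ.toEquiv ^ (k - 1)) c) := h6'.symm
          _ ≤ δ.toEquiv x₀ := hδm'.monotone hk1
          _ = δ x₀ := rfl
      have hsy : δ.symm y < y := by
        have h7 := hδ (δ.symm y)
        rwa [Homeomorph.apply_symm_apply] at h7
      have hsy1 : δ.symm y < x₁ := by
        apply hδmono.lt_iff_lt.mp
        rw [Homeomorph.apply_symm_apply]
        exact lt_of_le_of_lt hky (hδmono h01)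
      obtain ⟨x, hx1, hx2⟩ := exists_between
        (show max x₀ (δ.symm y) < min x₁ y from max_lt (lt_min h01 hk) (lt_min hsy1 hsy))
      have hxa : x₀ < x := lt_of_le_of_lt (le_max_left _ _) hx1
      have hxb : δ.symm y < x := lt_of_le_of_lt (le_max_right _ _) hx1
      have hxc : x < x₁ := lt_of_lt_of_le hx2 (min_le_left _ _)
      have hxd : x < y := lt_of_lt_of_le hx2 (min_le_right _ _)
      have hyδ : y < δ x := by
        have h8 := hδmono hxb
        rwa [Homeomorph.apply_symm_apply] at h8
      have hpW : ((x, y) : ℝ × ℝ) ∈ Wset δ x₀ x₁ := ⟨hxa, hxc, hxd, hyδ⟩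
      have hpL : ((x, y) : ℝ × ℝ) ∈ leafSet δ x₀ x₁ c := ⟨hpW, k, hydef⟩
      have hEq : leafSet δ x₀ x₁ ((g.toEquiv ^ m) c) = leafSet δ x₀ x₁ c :=
        (hleaf m c).symm.trans heq
      have hpL2 : ((x, y) : ℝ × ℝ) ∈ leafSet δ x₀ x₁ ((g.toEquiv ^ m) c) := by
        rw [hEq]; exact hpL
      obtain ⟨-, n', hn'⟩ := hpL2
      have h8 : (δ.toEquiv ^ n') ((g.toEquiv ^ m) c) = (δ.toEquiv ^ k) c :=
        hn'.symm.trans hydef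
      have hgm9 : (g.toEquiv ^ m) c = (δ.toEquiv ^ (-n' + k)) c := by
        calc (g.toEquiv ^ m) c
            = (δ.toEquiv ^ (-n')) ((δ.toEquiv ^ n') ((g.toEquiv ^ m) c)) := by
              rw [cancelPerm]; simp
          _ = (δ.toEquiv ^ (-n')) ((δ.toEquiv ^ k) c) := by rw [h8]
          _ = (δ.toEquiv ^ (-n' + k)) c := cancelPerm δ.toEquiv (-n') k c
      obtain ⟨j, hj⟩ := hhyp m (-n' + k) hm c hgm9
      rcases hj with hj | hj
      · exact Or.inl ⟨j, hj⟩
      · exact Or.inr ⟨j, hj⟩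
    · intro hc
      refine ⟨1, one_ne_zero, ?_⟩
      have hgc : g.toEquiv c = c := (hfix c).mpr hc
      rw [hleaf 1 c, zpow_one, hgc]
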